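/- Let w : ℝ² → ℝ be a bounded differentiable function whose gradient is bounded, with ‖w‖∞ = sup_{z∈ℝ²} |w(z)| and ‖∇w‖∞ = sup_{z∈ℝ²} ‖∇w(z)‖₂. Let I be a finite index set and, for each i ∈ I, let u_i = (a_i, b_i) and v_i = (c_i, d_i) be points of ℝ² with a_i ≤ b_i and c_i ≤ d_i (representing a matching between two persistence diagrams, where points matched to the diagonal have equal coordinates). Define the Betti functions β₁(t) = Σ_{i∈I} w(u_i)·χ_{[a_i,b_i)}(t) and β₂(t) = Σ_{i∈I} w(v_i)·χ_{[c_i,d_i)}(t), and let L = max_{i∈I} max{b_i − a_i, d_i − c_i}. Then ‖β₁ − β₂‖_{L¹} ≤ (‖w‖∞ + L·‖∇w‖∞) · Σ_{i∈I} ‖u_i − v_i‖₁, where ‖β₁ − β₂‖_{L¹} = ∫_ℝ |β₁(t) − β₂(t)| dt. -/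

import Mathlib

open MeasureTheory

noncomputable def chiIco (a b t : ℝ) : ℝ :=
  Set.indicator (Set.Ico a b) (fun _ => (1 : ℝ)) t

noncomputable def pt (a b : ℝ) : EuclideanSpace ℝ (Fin 2) :=
  (WithLp.equiv 2 (Fin 2 → ℝ)).symm ![a, b]

lemma chi_nonneg (a b t : ℝ) : 0 ≤ chiIco a b t :=
  Set.indicator_nonneg (fun _ _ => zero_le_one) t

lemma chi_integrable (a b : ℝ) : Integrable (fun t => chiIco a b t) := by
  unfold chiIco
  rw [integrable_indicator_iff measurableSet_Ico]
  exact integrableOn_const measure_Ico_lt_top.ne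

lemma chi_integral (a b : ℝ) (h : a ≤ b) : ∫ t, chiIco a b t = b - a := by
  unfold chiIco
  rw [integral_indicator measurableSet_Ico]
  simp [Real.volume_Ico, ENNReal.toReal_ofReal (by linarith : (0:ℝ) ≤ b - a), h]

lemma chi_abs_sub_le (a b c d t : ℝ) (hab : a ≤ b) (hcd : c ≤ d) :
    |chiIco a b t - chiIco c d t|
      ≤ chiIco (min a c) (max a c) t + chiIco (min b d) (max b d) t := by
  by_cases h1 : t ∈ Set.Ico a b <;> by_cases h2 : t ∈ Set.Ico c d
  · simp only [chiIco, Set.indicator_of_mem h1, Set.indicator_of_mem h2, sub_self, abs_zero]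
    exact add_nonneg (chi_nonneg _ _ _) (chi_nonneg _ _ _)
  · simp only [chiIco, Set.indicator_of_mem h1, Set.indicator_of_notMem h2, sub_zero, abs_one]
    rw [Set.mem_Ico, not_and_or, not_le, not_lt] at h2
    obtain h1 := Set.mem_Ico.1 h1
    rcases h2 with h2 | h2
    · have : t ∈ Set.Ico (min a c) (max a c) :=
        ⟨le_trans (min_le_left _ _) h1.1, lt_of_lt_of_le h2 (le_max_right _ _)⟩
      calc (1:ℝ) = chiIco (min a c) (max a c) t := by
            simp [chiIco, Set.indicator_of_mem this]
        _ ≤ _ := le_add_of_nonneg_right (chi_nonneg _ _ _)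
    · have : t ∈ Set.Ico (min b d) (max b d) :=
        ⟨le_trans (min_le_right _ _) h2, lt_of_lt_of_le h1.2 (le_max_left _ _)⟩
      calc (1:ℝ) = chiIco (min b d) (max b d) t := by
            simp [chiIco, Set.indicator_of_mem this]
        _ ≤ _ := le_add_of_nonneg_left (chi_nonneg _ _ _)
  · simp only [chiIco, Set.indicator_of_notMem h1, Set.indicator_of_mem h2, zero_sub, abs_neg,
      abs_one]
    rw [Set.mem_Ico, not_and_or, not_le, not_lt] at h1
    obtain h2 := Set.mem_Ico.1 h2
    rcases h1 with h1 | h1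
    · have : t ∈ Set.Ico (min a c) (max a c) :=
        ⟨le_trans (min_le_right _ _) h2.1, lt_of_lt_of_le h1 (le_max_left _ _)⟩
      calc (1:ℝ) = chiIco (min a c) (max a c) t := by
            simp [chiIco, Set.indicator_of_mem this]
        _ ≤ _ := le_add_of_nonneg_right (chi_nonneg _ _ _)
    · have : t ∈ Set.Ico (min b d) (max b d) :=
        ⟨le_trans (min_le_left _ _) h1, lt_of_lt_of_le h2.2 (le_max_right _ _)⟩
      calc (1:ℝ) = chiIco (min b d) (max b d) t := by
            simp [chiIco, Set.indicator_of_mem this]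
        _ ≤ _ := le_add_of_nonneg_left (chi_nonneg _ _ _)
  · simp only [chiIco, Set.indicator_of_notMem h1, Set.indicator_of_notMem h2, sub_self,
      abs_zero]
    exact add_nonneg (chi_nonneg _ _ _) (chi_nonneg _ _ _)

lemma pt_norm_le (a b c d : ℝ) : ‖pt a b - pt c d‖ ≤ |a - c| + |b - d| := by
  have h : pt a b - pt c d = pt (a - c) (b - d) := by
    unfold pt
    ext i
    fin_cases i <;> simp [WithLp.equiv_symm_apply, PiLp.toLp_apply]
  rw [h]
  have hnorm : ‖pt (a - c) (b - d)‖ = Real.sqrt ((a - c) ^ 2 + (b - d) ^ 2) := by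
    rw [EuclideanSpace.norm_eq]
    unfold pt
    simp [WithLp.equiv_symm_apply, PiLp.toLp_apply, Fin.sum_univ_two, sq_abs]
  rw [hnorm]
  rw [show (a - c) ^ 2 + (b - d) ^ 2 = |a - c| ^ 2 + |b - d| ^ 2 by rw [sq_abs, sq_abs]]
  calc Real.sqrt (|a - c| ^ 2 + |b - d| ^ 2) ≤ Real.sqrt ((|a - c| + |b - d|) ^ 2) := by
        apply Real.sqrt_le_sqrt
        nlinarith [abs_nonneg (a - c), abs_nonneg (b - d)]
    _ = |a - c| + |b - d| :=
        Real.sqrt_sq (by positivity)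

lemma lip_bound (w : EuclideanSpace ℝ (Fin 2) → ℝ) (Wg : ℝ)
    (hdiff : Differentiable ℝ w) (hWg : ∀ z, ‖gradient w z‖ ≤ Wg)
    (x y : EuclideanSpace ℝ (Fin 2)) : |w x - w y| ≤ Wg * ‖x - y‖ := by
  have hfd : ∀ z ∈ (Set.univ : Set (EuclideanSpace ℝ (Fin 2))),
      ‖fderivWithin ℝ w Set.univ z‖ ≤ Wg := by
    intro z _
    rw [fderivWithin_univ]
    have := hWg z
    rwa [gradient, LinearIsometryEquiv.norm_map] at this
  have := (convex_univ).norm_image_sub_le_of_norm_fderivWithin_le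
    (fun z _ => (hdiff z).differentiableWithinAt) hfd (Set.mem_univ y) (Set.mem_univ x)
  simpa [Real.norm_eq_abs] using this
/-- **Stability of Betti functions (Theorem 1).** Let `w : ℝ² → ℝ` be a bounded
differentiable function with bounded gradient (`W` bounds `|w|` and `Wg` bounds the
Euclidean norm of `∇w`). Given a matching `i ↦ (uᵢ, vᵢ)` between two persistence
diagrams, with `uᵢ = (aᵢ, bᵢ)`, `vᵢ = (cᵢ, dᵢ)`, `aᵢ ≤ bᵢ`, `cᵢ ≤ dᵢ`, and
`L ≥ max (bᵢ - aᵢ) (dᵢ - cᵢ)` for all `i`, the Betti functions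
`β₁(t) = Σᵢ w(uᵢ)·χ_{[aᵢ,bᵢ)}(t)` and `β₂(t) = Σᵢ w(vᵢ)·χ_{[cᵢ,dᵢ)}(t)` satisfy
`‖β₁ − β₂‖_{L¹} ≤ (W + L·Wg) · Σᵢ ‖uᵢ − vᵢ‖₁`. -/
theorem betti_function_stability
    (w : EuclideanSpace ℝ (Fin 2) → ℝ) (W Wg : ℝ)
    (hdiff : Differentiable ℝ w)
    (hW : ∀ z, |w z| ≤ W)
    (hWg : ∀ z, ‖gradient w z‖ ≤ Wg)
    (ι : Type*) [Fintype ι]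
    (a b c d : ι → ℝ)
    (hab : ∀ i, a i ≤ b i) (hcd : ∀ i, c i ≤ d i)
    (L : ℝ) (hL : ∀ i, max (b i - a i) (d i - c i) ≤ L) :
    ∫ t : ℝ, |(∑ i, w (pt (a i) (b i)) * chiIco (a i) (b i) t)
        - ∑ i, w (pt (c i) (d i)) * chiIco (c i) (d i) t|
      ≤ (W + L * Wg) * ∑ i, (|a i - c i| + |b i - d i|) := by
  set u : ι → EuclideanSpace ℝ (Fin 2) := fun i => pt (a i) (b i) with hu
  set v : ι → EuclideanSpace ℝ (Fin 2) := fun i => pt (c i) (d i) with hv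
  set g : ι → ℝ → ℝ := fun i t =>
    |w (u i)| * (chiIco (min (a i) (c i)) (max (a i) (c i)) t
      + chiIco (min (b i) (d i)) (max (b i) (d i)) t)
    + |w (u i) - w (v i)| * chiIco (c i) (d i) t with hg
  have hgint : ∀ i, Integrable (g i) := fun i => by
    exact (((chi_integrable _ _).add (chi_integrable _ _)).const_mul _).add
      ((chi_integrable _ _).const_mul _)
  have hfint : Integrable (fun t : ℝ =>
      (∑ i, w (u i) * chiIco (a i) (b i) t) - ∑ i, w (v i) * chiIco (c i) (d i) t) := by
    exact (integrable_finset_sum _ fun i _ => (chi_integrable _ _).const_mul _).sub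
      (integrable_finset_sum _ fun i _ => (chi_integrable _ _).const_mul _)
  have hpt : ∀ t : ℝ,
      |(∑ i, w (u i) * chiIco (a i) (b i) t) - ∑ i, w (v i) * chiIco (c i) (d i) t|
        ≤ ∑ i, g i t := by
    intro t
    rw [← Finset.sum_sub_distrib]
    refine le_trans (Finset.abs_sum_le_sum_abs _ _) (Finset.sum_le_sum fun i _ => ?_)
    have key : w (u i) * chiIco (a i) (b i) t - w (v i) * chiIco (c i) (d i) t
        = w (u i) * (chiIco (a i) (b i) t - chiIco (c i) (d i) t)
          + (w (u i) - w (v i)) * chiIco (c i) (d i) t := by ring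
    rw [key]
    refine le_trans (abs_add_le _ _) ?_
    rw [abs_mul, abs_mul]
    apply add_le_add
    · exact mul_le_mul_of_nonneg_left
        (chi_abs_sub_le _ _ _ _ _ (hab i) (hcd i)) (abs_nonneg _)
    · exact mul_le_mul_of_nonneg_left
        (le_of_eq (abs_of_nonneg (chi_nonneg _ _ _))) (abs_nonneg _)
  calc ∫ t : ℝ, |(∑ i, w (u i) * chiIco (a i) (b i) t)
        - ∑ i, w (v i) * chiIco (c i) (d i) t|
      ≤ ∫ t : ℝ, ∑ i, g i t := by
        exact integral_mono hfint.abs (integrable_finset_sum _ fun i _ => hgint i)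
          fun t => hpt t
    _ = ∑ i, ∫ t : ℝ, g i t := integral_finset_sum _ fun i _ => hgint i
    _ ≤ ∑ i, (W + L * Wg) * (|a i - c i| + |b i - d i|) := by
        refine Finset.sum_le_sum fun i _ => ?_
        have hint : ∫ t : ℝ, g i t
            = |w (u i)| * (|a i - c i| + |b i - d i|)
              + |w (u i) - w (v i)| * (d i - c i) := by
          simp only [hg]
          have e1 : Integrable (fun t : ℝ => |w (u i)| *
              (chiIco (min (a i) (c i)) (max (a i) (c i)) t
                + chiIco (min (b i) (d i)) (max (b i) (d i)) t)) := by
            have := (((chi_integrable (min (a i) (c i)) (max (a i) (c i))).add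
              (chi_integrable (min (b i) (d i)) (max (b i) (d i)))).const_mul (|w (u i)|))
            simpa [Pi.add_apply] using this
          have e2 : Integrable (fun t : ℝ =>
              |w (u i) - w (v i)| * chiIco (c i) (d i) t) :=
            (chi_integrable _ _).const_mul _
          rw [integral_add e1 e2, integral_const_mul, integral_const_mul,
            integral_add (chi_integrable _ _) (chi_integrable _ _),
            chi_integral _ _ (min_le_max), chi_integral _ _ (min_le_max),
            chi_integral _ _ (hcd i), max_sub_min_eq_abs, max_sub_min_eq_abs, abs_sub_comm (c i) (a i), abs_sub_comm (d i) (b i)]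
        rw [hint]
        have hWg0 : 0 ≤ Wg := le_trans (norm_nonneg _) (hWg 0)
        have hL0 : 0 ≤ L := le_trans (le_trans (by linarith [hcd i]) (le_max_right _ _)) (hL i)
        have h1 : |w (u i)| * (|a i - c i| + |b i - d i|)
            ≤ W * (|a i - c i| + |b i - d i|) :=
          mul_le_mul_of_nonneg_right (hW _) (by positivity)
        have h2 : |w (u i) - w (v i)| * (d i - c i)
            ≤ (Wg * (|a i - c i| + |b i - d i|)) * L := by
          have hlip : |w (u i) - w (v i)| ≤ Wg * (|a i - c i| + |b i - d i|) :=
            le_trans (lip_bound w Wg hdiff hWg (u i) (v i))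
              (mul_le_mul_of_nonneg_left (pt_norm_le _ _ _ _) hWg0)
          have hdc : d i - c i ≤ L := le_trans (le_max_right _ _) (hL i)
          calc |w (u i) - w (v i)| * (d i - c i)
              ≤ (Wg * (|a i - c i| + |b i - d i|)) * (d i - c i) :=
                mul_le_mul_of_nonneg_right hlip (by linarith [hcd i])
            _ ≤ (Wg * (|a i - c i| + |b i - d i|)) * L :=
                mul_le_mul_of_nonneg_left hdc (by positivity)
        nlinarith [h1, h2]
    _ = (W + L * Wg) * ∑ i, (|a i - c i| + |b i - d i|) := by rw [Finset.mul_sum]
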